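/- In the Beltrami–Klein model with foci F₁ = (1,f,0), F₂ = (1,-f,0), 0 < f < 1, a proper point P = (1,x,y) satisfying |d(P,F₁) - d(P,F₂)| = 2a (with 0 < 2a < d(F₁,F₂)) satisfies x²/tanh²(a) + y²/(1 + 1/((f²-1)cosh²(a))) = 1, where now the coefficient 1 + 1/((f²-1)cosh²(a)) is negative, so the curve is a Euclidean hyperbola in the model. -/

import Mathlib

open Real

/-- Lorentzian bilinear form of signature (1,2) on coordinate triples. -/
def lor (u v : ℝ × ℝ × ℝ) : ℝ := -(u.1 * v.1) + u.2.1 * v.2.1 + u.2.2 * v.2.2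

set_option maxHeartbeats 1000000 in
/-- A proper point of the Beltrami–Klein model whose hyperbolic distances to the foci
`F₁ = (1,f,0)`, `F₂ = (1,-f,0)` differ in absolute value by `2a` (with `0 < 2a` smaller
than the distance of the foci) lies on the curve
`x²/tanh²a + y²/(1 + 1/((f²-1)cosh²a)) = 1`, whose second coefficient is negative,
so the curve is a Euclidean hyperbola in the model. -/
theorem stmt_4 (f a x y d₁ d₂ dF : ℝ)
    (hf : 0 < f) (hf' : f < 1) (hP : x ^ 2 + y ^ 2 < 1)
    (hd₁ : 0 ≤ d₁) (hd₂ : 0 ≤ d₂) (hdF : 0 ≤ dF)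
    (h₁ : Real.cosh d₁ = -(lor (1, x, y) (1, f, 0)) /
        Real.sqrt (lor (1, x, y) (1, x, y) * lor (1, f, 0) (1, f, 0)))
    (h₂ : Real.cosh d₂ = -(lor (1, x, y) (1, -f, 0)) /
        Real.sqrt (lor (1, x, y) (1, x, y) * lor (1, -f, 0) (1, -f, 0)))
    (hF : Real.cosh dF = -(lor (1, f, 0) (1, -f, 0)) /
        Real.sqrt (lor (1, f, 0) (1, f, 0) * lor (1, -f, 0) (1, -f, 0)))
    (hdiff : |d₁ - d₂| = 2 * a) (ha0 : 0 < 2 * a) (ha : 2 * a < dF) :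
    x ^ 2 / Real.tanh a ^ 2 +
      y ^ 2 / (1 + 1 / ((f ^ 2 - 1) * Real.cosh a ^ 2)) = 1 ∧
    1 + 1 / ((f ^ 2 - 1) * Real.cosh a ^ 2) < 0 := by
  have hQ : 0 < 1 - x ^ 2 - y ^ 2 := by linarith
  have hf2 : 0 < 1 - f ^ 2 := by nlinarith
  set S := Real.sqrt ((1 - x ^ 2 - y ^ 2) * (1 - f ^ 2)) with hSdef
  have hS2 : S ^ 2 = (1 - x ^ 2 - y ^ 2) * (1 - f ^ 2) :=
    Real.sq_sqrt (by positivity)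
  have hSpos : 0 < S := Real.sqrt_pos.2 (by positivity)
  have hSne : S ≠ 0 := hSpos.ne'
  have hc1 : Real.cosh d₁ = (1 - f * x) / S := by
    rw [h₁]
    have e : lor (1, x, y) (1, x, y) * lor (1, f, 0) (1, f, 0)
        = (1 - x ^ 2 - y ^ 2) * (1 - f ^ 2) := by simp [lor]; ring
    rw [e, ← hSdef]
    congr 1
    simp [lor]; ring
  have hc2 : Real.cosh d₂ = (1 + f * x) / S := by
    rw [h₂]
    have e : lor (1, x, y) (1, x, y) * lor (1, -f, 0) (1, -f, 0)
        = (1 - x ^ 2 - y ^ 2) * (1 - f ^ 2) := by simp [lor]; ring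
    rw [e, ← hSdef]
    congr 1
    simp [lor]; ring
  have hcF : Real.cosh dF = (1 + f ^ 2) / (1 - f ^ 2) := by
    rw [hF]
    have e : lor (1, f, 0) (1, f, 0) * lor (1, -f, 0) (1, -f, 0) = (1 - f ^ 2) ^ 2 := by
      simp [lor]; ring
    rw [e, Real.sqrt_sq hf2.le]
    congr 1
    simp [lor]; ring
  -- positivity facts about cosh a
  have ha' : 0 < a := by linarith
  have hC1 : 1 < Real.cosh a := Real.one_lt_cosh.2 ha'.ne'
  have hCpos : (0:ℝ) < Real.cosh a ^ 2 := by positivity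
  have hC1' : 1 < Real.cosh a ^ 2 := by nlinarith
  -- cosh 2a < cosh dF gives the sign condition
  have hlt : Real.cosh (2 * a) < Real.cosh dF := by
    rw [Real.cosh_lt_cosh, abs_of_pos ha0, abs_of_nonneg hdF]; exact ha
  have h2a : Real.cosh (2 * a) = 2 * Real.cosh a ^ 2 - 1 := by
    rw [Real.cosh_two_mul, Real.sinh_sq]; ring
  have hsign : (1 - f ^ 2) * Real.cosh a ^ 2 < 1 := by
    rw [h2a, hcF, lt_div_iff₀ hf2] at hlt
    nlinarith
  have hDneg : (f ^ 2 - 1) * Real.cosh a ^ 2 < 0 := by nlinarith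
  have hconj2 : 1 + 1 / ((f ^ 2 - 1) * Real.cosh a ^ 2) < 0 := by
    have h1 : 1 / ((f ^ 2 - 1) * Real.cosh a ^ 2) < -1 := by
      rw [div_lt_iff_of_neg hDneg]; nlinarith
    linarith
  -- main identity
  have hcd : Real.cosh d₁ * Real.cosh d₂ - Real.sinh d₁ * Real.sinh d₂
      = Real.cosh (2 * a) := by
    rw [← Real.cosh_sub, ← Real.cosh_abs, hdiff]
  have key : (Real.cosh d₁ * Real.cosh d₂ - Real.cosh (2 * a)) ^ 2
      = (Real.cosh d₁ ^ 2 - 1) * (Real.cosh d₂ ^ 2 - 1) := by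
    have h3 : Real.cosh d₁ * Real.cosh d₂ - Real.cosh (2 * a)
        = Real.sinh d₁ * Real.sinh d₂ := by linarith
    rw [h3, mul_pow, Real.sinh_sq, Real.sinh_sq]
  have hc1' : Real.cosh d₁ * S = 1 - f * x := by rw [hc1]; field_simp
  have hc2' : Real.cosh d₂ * S = 1 + f * x := by rw [hc2]; field_simp
  have key2 : ((1 - f * x) * (1 + f * x) - (2 * Real.cosh a ^ 2 - 1) * S ^ 2) ^ 2
      = ((1 - f * x) ^ 2 - S ^ 2) * ((1 + f * x) ^ 2 - S ^ 2) := by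
    calc ((1 - f * x) * (1 + f * x) - (2 * Real.cosh a ^ 2 - 1) * S ^ 2) ^ 2
        = (Real.cosh d₁ * S * (Real.cosh d₂ * S)
            - (2 * Real.cosh a ^ 2 - 1) * S ^ 2) ^ 2 := by rw [hc1', hc2']
      _ = S ^ 2 * S ^ 2 * ((Real.cosh d₁ * Real.cosh d₂ - (2 * Real.cosh a ^ 2 - 1)) ^ 2) := by
            ring
      _ = S ^ 2 * S ^ 2 * ((Real.cosh d₁ ^ 2 - 1) * (Real.cosh d₂ ^ 2 - 1)) := by
            rw [← h2a, key]
      _ = ((Real.cosh d₁ * S) ^ 2 - S ^ 2) * ((Real.cosh d₂ * S) ^ 2 - S ^ 2) := by ring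
      _ = ((1 - f * x) ^ 2 - S ^ 2) * ((1 + f * x) ^ 2 - S ^ 2) := by rw [hc1', hc2']
  rw [hS2] at key2
  have hE4 : (1 - x ^ 2 - y ^ 2) * (1 - f ^ 2) *
      (1 - Real.cosh a ^ 2 + Real.cosh a ^ 2 * f ^ 2 * x ^ 2 +
        Real.cosh a ^ 2 * (Real.cosh a ^ 2 - 1) * (1 - f ^ 2) * (1 - x ^ 2 - y ^ 2)) = 0 := by
    linear_combination (1/4 : ℝ) * key2
  have hne : (1 - x ^ 2 - y ^ 2) * (1 - f ^ 2) ≠ 0 := by positivity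
  have hE : 1 - Real.cosh a ^ 2 + Real.cosh a ^ 2 * f ^ 2 * x ^ 2 +
      Real.cosh a ^ 2 * (Real.cosh a ^ 2 - 1) * (1 - f ^ 2) * (1 - x ^ 2 - y ^ 2) = 0 :=
    (mul_eq_zero.mp hE4).resolve_left hne
  refine ⟨?_, hconj2⟩
  have htanh : Real.tanh a ^ 2 = (Real.cosh a ^ 2 - 1) / Real.cosh a ^ 2 := by
    rw [Real.tanh_eq_sinh_div_cosh, div_pow, Real.sinh_sq]
  rw [htanh]
  have hCne : Real.cosh a ^ 2 ≠ 0 := hCpos.ne'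
  have hC1ne : Real.cosh a ^ 2 - 1 ≠ 0 := ne_of_gt (by nlinarith)
  have hDne : (f ^ 2 - 1) * Real.cosh a ^ 2 ≠ 0 := hDneg.ne
  have hD1ne : (f ^ 2 - 1) * Real.cosh a ^ 2 + 1 ≠ 0 := ne_of_gt (by nlinarith)
  have hden : 1 + 1 / ((f ^ 2 - 1) * Real.cosh a ^ 2)
      = ((f ^ 2 - 1) * Real.cosh a ^ 2 + 1) / ((f ^ 2 - 1) * Real.cosh a ^ 2) := by
    rw [add_div, div_self hDne]
  rw [hden, div_div_eq_mul_div, div_div_eq_mul_div, div_add_div _ _ hC1ne hD1ne,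
    div_eq_one_iff_eq (mul_ne_zero hC1ne hD1ne)]
  linear_combination hE
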